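/- For all formulas φ₁, φ₂, φ₃ of lexicographic logic and every truth assignment I, ⟦φ₁ ≫ (φ₂ ∧ φ₃)⟧(I) = ⟦(φ₁ ≫ φ₂) ∧ (φ₁ ≫ φ₃)⟧(I). -/
import Mathlib


/-- The three truth symbols F, 0 (Z), T. -/
inductive TSym : Type
  | F | Z | T
deriving DecidableEq

open TSym

/-- The operation u ≫ v on lists of symbols. -/
def lexOp (u v : List TSym) : List TSym :=
  if u = [F] ∧ v = [F] then [F]
  else if u = [T] ∧ v = [T] then [T]
  else Z :: (u ++ v)

/-- The truth domain 𝕍 as an inductive predicate. -/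
inductive Vmem : List TSym → Prop
  | F : Vmem [F]
  | T : Vmem [T]
  | op {u v : List TSym} : Vmem u → Vmem v → Vmem (lexOp u v)

def symRank : TSym → ℕ
  | F => 0 | Z => 1 | T => 2

/-- The order F < 0 < T on symbols. -/
def symLt (a b : TSym) : Prop := symRank a < symRank b

/-- Lexicographic order on lists induced by F < 0 < T. -/
def listLt (u v : List TSym) : Prop := List.Lex symLt u v

/-- Pointwise negation F ↦ T, T ↦ F, 0 ↦ 0. -/
def symNeg : TSym → TSym
  | F => T | T => F | Z => Z

def negList (v : List TSym) : List TSym := v.map symNeg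

def symVal : TSym → ℚ
  | F => -1 | Z => 0 | T => 1

/-- val([u₁,…,u_n]) = Σ symVal(u_i) · (1/3)^(i-1). -/
def val : List TSym → ℚ
  | [] => 0
  | a :: t => symVal a + val t / 3

open Classical in
/-- Lexicographic minimum. -/
noncomputable def minL (u v : List TSym) : List TSym := if listLt u v then u else v

open Classical in
/-- Lexicographic maximum. -/
noncomputable def maxL (u v : List TSym) : List TSym := if listLt u v then v else u

/-- Formulas of lexicographic logic. -/
inductive Formula (α : Type) : Type
  | atom : α → Formula α
  | and : Formula α → Formula α → Formula α
  | or : Formula α → Formula α → Formula α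
  | neg : Formula α → Formula α
  | lex : Formula α → Formula α → Formula α

/-- Semantics of lexicographic logic. -/
noncomputable def eval {α : Type} (I : α → List TSym) : Formula α → List TSym
  | Formula.atom a => I a
  | Formula.and φ ψ => minL (eval I φ) (eval I ψ)
  | Formula.or φ ψ => maxL (eval I φ) (eval I ψ)
  | Formula.neg φ => negList (eval I φ)
  | Formula.lex φ ψ => lexOp (eval I φ) (eval I ψ)


instance : DecidableRel symLt := fun a b => Nat.decLt (symRank a) (symRank b)

instance : IsTrichotomous TSym symLt := ⟨fun a b => by cases a <;> cases b <;> simp [symLt, symRank]⟩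
instance : IsAsymm TSym symLt := ⟨fun a b => by cases a <;> cases b <;> simp [symLt, symRank]⟩
instance : IsIrrefl TSym symLt := ⟨fun a => by cases a <;> simp [symLt, symRank]⟩

lemma vmem_shape {u : List TSym} (h : Vmem u) :
    u = [F] ∨ u = [T] ∨ ∃ t, u = Z :: t := by
  cases h with
  | F => left; rfl
  | T => right; left; rfl
  | @op a b _ _ =>
    unfold lexOp
    split
    · left; rfl
    · split
      · right; left; rfl
      · right; right; exact ⟨a ++ b, rfl⟩

lemma not_lt_F {v : List TSym} (h : Vmem v) : ¬ listLt v [F] := by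
  rcases vmem_shape h with rfl | rfl | ⟨t, rfl⟩ <;> intro hc <;>
    cases hc <;> simp_all [symLt, symRank]

lemma not_T_lt {w : List TSym} (h : Vmem w) : ¬ listLt [T] w := by
  rcases vmem_shape h with rfl | rfl | ⟨t, rfl⟩ <;> intro hc <;>
    cases hc <;> simp_all [symLt, symRank]

lemma lexOp_mono {u v w : List TSym} (hv : Vmem v) (hw : Vmem w)
    (h : listLt v w) : listLt (lexOp u v) (lexOp u w) := by
  unfold lexOp
  by_cases h1 : u = [F] ∧ v = [F]
  · rw [if_pos h1]
    have hw1 : ¬ (u = [F] ∧ w = [F]) := by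
      rintro ⟨-, rfl⟩; exact not_lt_F hw (h1.2 ▸ h)
    rw [if_neg hw1]
    have hw2 : ¬ (u = [T] ∧ w = [T]) := by rintro ⟨rfl, -⟩; exact absurd h1.1 (by simp)
    rw [if_neg hw2]
    exact List.Lex.rel (by decide)
  · rw [if_neg h1]
    by_cases h2 : u = [T] ∧ v = [T]
    · exact absurd (h2.2 ▸ h) (not_T_lt hw)
    · rw [if_neg h2]
      by_cases h3 : u = [F] ∧ w = [F]
      · exact absurd (h3.2 ▸ h) (not_lt_F hv)
      · rw [if_neg h3]
        by_cases h4 : u = [T] ∧ w = [T]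
        · rw [if_pos h4]; exact List.Lex.rel (by decide)
        · rw [if_neg h4]
          exact List.Lex.cons (List.Lex.append_left _ h u)

lemma negList_negList (u : List TSym) : negList (negList u) = u := by
  simp only [negList, List.map_map]
  have : symNeg ∘ symNeg = id := by funext a; cases a <;> rfl
  simp [this]

lemma vmem_negList {u : List TSym} (h : Vmem u) : Vmem (negList u) := by
  induction h with
  | F => exact Vmem.T
  | T => exact Vmem.F
  | @op a b ha hb iha ihb =>
    unfold lexOp
    by_cases h1 : a = [F] ∧ b = [F]
    · rw [if_pos h1]; exact Vmem.T
    · rw [if_neg h1]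
      by_cases h2 : a = [T] ∧ b = [T]
      · rw [if_pos h2]; exact Vmem.F
      · rw [if_neg h2]
        have key : negList (Z :: (a ++ b)) = lexOp (negList a) (negList b) := by
          have e1 : ¬ (negList a = [F] ∧ negList b = [F]) := by
            rintro ⟨p, q⟩
            exact h2 ⟨by rw [← negList_negList a, p]; rfl,
                      by rw [← negList_negList b, q]; rfl⟩
          have e2 : ¬ (negList a = [T] ∧ negList b = [T]) := by
            rintro ⟨p, q⟩
            exact h1 ⟨by rw [← negList_negList a, p]; rfl,
                      by rw [← negList_negList b, q]; rfl⟩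
          rw [lexOp, if_neg e1, if_neg e2]
          simp [negList, symNeg]
        rw [key]
        exact Vmem.op iha ihb

lemma eval_vmem {α : Type} (I : α → List TSym) (hI : ∀ a, Vmem (I a)) :
    ∀ φ : Formula α, Vmem (eval I φ) := by
  intro φ
  induction φ with
  | atom a => exact hI a
  | and φ ψ ihφ ihψ =>
    show Vmem (minL _ _)
    unfold minL; split <;> assumption
  | or φ ψ ihφ ihψ =>
    show Vmem (maxL _ _)
    unfold maxL; split <;> assumption
  | neg φ ihφ => exact vmem_negList ihφ
  | lex φ ψ ihφ ihψ => exact Vmem.op ihφ ihψ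

theorem lex_and_distrib {α : Type} (φ₁ φ₂ φ₃ : Formula α) (I : α → List TSym)
    (hI : ∀ a, Vmem (I a)) :
    eval I (Formula.lex φ₁ (Formula.and φ₂ φ₃)) =
      eval I (Formula.and (Formula.lex φ₁ φ₂) (Formula.lex φ₁ φ₃)) := by
  have hb := eval_vmem I hI φ₂
  have hc := eval_vmem I hI φ₃
  show lexOp (eval I φ₁) (minL (eval I φ₂) (eval I φ₃)) =
    minL (lexOp (eval I φ₁) (eval I φ₂)) (lexOp (eval I φ₁) (eval I φ₃))
  set a := eval I φ₁
  set b := eval I φ₂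
  set c := eval I φ₃
  rcases trichotomous_of (List.Lex symLt) b c with h | h | h
  · have h : listLt b c := h
    rw [minL, if_pos h, minL, if_pos (lexOp_mono hb hc h)]
  · rw [h, minL, ite_self, minL, ite_self]
  · have h : listLt c b := h
    have h' := lexOp_mono hc hb h (u := a)
    have hn : ¬ listLt b c := asymm (r := List.Lex symLt) h
    have hn' : ¬ listLt (lexOp a b) (lexOp a c) := asymm (r := List.Lex symLt) h'
    rw [minL, if_neg hn, minL, if_neg hn']
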